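/- arXiv:2004.04028 — 15 statements merged into one kernel-verified Lean document; each statement's English description precedes it below -/
import Mathlib

section
/- A map s: S × S → S × S defined by s(x,y) = (x·y, θ_x(y)) is a set-theoretic solution of the Pentagon Equation s₂₃s₁₃s₁₂ = s₁₂s₂₃ if and only if for all x,y,z ∈ S: (x·y)·z = x·(y·z), θ_x(y)·θ_{x·y}(z) = θ_x(y·z), and θ_{θ_x(y)} ∘ θ_{x·y} = θ_y. -/
def pentMap12 {S : Type*} (s : S × S → S × S) : S × S × S → S × S × S :=
  fun p => ((s (p.1, p.2.1)).1, (s (p.1, p.2.1)).2, p.2.2)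

def pentMap23 {S : Type*} (s : S × S → S × S) : S × S × S → S × S × S :=
  fun p => (p.1, s (p.2.1, p.2.2))

def pentMap13 {S : Type*} (s : S × S → S × S) : S × S × S → S × S × S :=
  fun p => ((s (p.1, p.2.2)).1, p.2.1, (s (p.1, p.2.2)).2)

/-- `s` is a set-theoretic solution of the Pentagon Equation: s₂₃ s₁₃ s₁₂ = s₁₂ s₂₃. -/
def IsPentagonSolution {S : Type*} (s : S × S → S × S) : Prop :=
  pentMap23 s ∘ pentMap13 s ∘ pentMap12 s = pentMap12 s ∘ pentMap23 s

/-- The map t = τ s τ. -/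
def flipConj {S : Type*} (s : S × S → S × S) : S × S → S × S :=
  fun p => Prod.swap (s (p.2, p.1))

/-- `s` is a solution of the Reversed Pentagon Equation: for t = τsτ, t₁₂ t₁₃ t₂₃ = t₂₃ t₁₂. -/
def IsRPESolution {S : Type*} (s : S × S → S × S) : Prop :=
  pentMap12 (flipConj s) ∘ pentMap13 (flipConj s) ∘ pentMap23 (flipConj s) =
    pentMap23 (flipConj s) ∘ pentMap12 (flipConj s)

theorem pentagon_iff_conditions {S : Type*} [Nonempty S] (mul θ : S → S → S)
    (s : S × S → S × S) (hs : ∀ x y, s (x, y) = (mul x y, θ x y)) :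
    IsPentagonSolution s ↔
      ((∀ x y z, mul (mul x y) z = mul x (mul y z)) ∧
        (∀ x y z, mul (θ x y) (θ (mul x y) z) = θ x (mul y z)) ∧
        (∀ x y z, θ (θ x y) (θ (mul x y) z) = θ y z)) := by
  constructor
  · intro h
    have h' : ∀ x y z : S, (pentMap23 s ∘ pentMap13 s ∘ pentMap12 s) (x, y, z) =
        (pentMap12 s ∘ pentMap23 s) (x, y, z) := fun x y z => congrFun h (x, y, z)
    simp only [Function.comp, pentMap12, pentMap13, pentMap23, hs, Prod.mk.injEq] at h'
    exact ⟨fun x y z => (h' x y z).1, fun x y z => (h' x y z).2.1,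
      fun x y z => (h' x y z).2.2⟩
  · rintro ⟨h1, h2, h3⟩
    funext p
    obtain ⟨x, y, z⟩ := p
    simp only [Function.comp, pentMap12, pentMap13, pentMap23, hs, Prod.mk.injEq]
    exact ⟨h1 x y z, h2 x y z, h3 x y z⟩
end

section
/- If (S,s) is a bijective set-theoretic solution of the Pentagon Equation, then S = SS (every element of S is a product of two elements) with respect to the multiplication x·y given by the first component of s(x,y). -/
theorem bijective_pentagon_S_eq_SS {S : Type*} (mul θ : S → S → S)
    (s : S × S → S × S) (hs : ∀ x y, s (x, y) = (mul x y, θ x y))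
    (hassoc : ∀ x y z, mul (mul x y) z = mul x (mul y z))
    (hPE : IsPentagonSolution s) (hbij : Function.Bijective s) :
    ∀ x : S, ∃ u v : S, x = mul u v := by
  intro x
  obtain ⟨⟨u, v⟩, huv⟩ := hbij.2 (x, x)
  exact ⟨u, v, by have := (hs u v).symm.trans huv; exact (congrArg Prod.fst this).symm⟩
end

section
/- If (S,s) is a bijective set-theoretic solution of the Pentagon Equation, then the set T = {θ_x : x ∈ S} is closed under composition, i.e., T is a subsemigroup of the monoid of maps S → S. Specifically, θ_y ∘ θ_x = θ_v whenever s(u,v) = (x,y). -/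
theorem bijective_pentagon_theta_closed {S : Type*} (mul θ : S → S → S)
    (s : S × S → S × S) (hs : ∀ x y, s (x, y) = (mul x y, θ x y))
    (hPE : IsPentagonSolution s) (hbij : Function.Bijective s) :
    (∀ u v x y : S, s (u, v) = (x, y) → θ y ∘ θ x = θ v) ∧
      (∀ x y : S, ∃ z : S, θ y ∘ θ x = θ z) := by

  have key : ∀ x y z : S, θ (θ x y) (θ (mul x y) z) = θ y z := by
    intro x y z
    have h := congrFun hPE (x, y, z)
    simp only [pentMap12, pentMap13, pentMap23, Function.comp_apply, hs, Prod.mk.injEq] at h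
    exact h.2.2
  have main : ∀ u v x y : S, s (u, v) = (x, y) → θ y ∘ θ x = θ v := by
    intro u v x y h
    rw [hs] at h
    obtain ⟨hx, hy⟩ := Prod.mk.injEq .. ▸ h
    funext z
    simp only [Function.comp_apply, ← hx, ← hy, key]
  refine ⟨main, fun x y => ?_⟩
  obtain ⟨⟨u, v⟩, huv⟩ := hbij.2 (x, y)
  exact ⟨v, main u v x y huv⟩
end

section
/- If (S,s) is a set-theoretic solution of the Pentagon Equation and s is bijective of finite order (sⁿ = id for some n ≥ 1), then the semigroup (S,·) is simple, i.e., every two-sided ideal of S equals S. In particular x ∈ SyS for all x,y ∈ S. -/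
theorem finite_order_pentagon_simple {S : Type*} (mul θ : S → S → S)
    (s : S × S → S × S) (hs : ∀ x y, s (x, y) = (mul x y, θ x y))
    (hPE : IsPentagonSolution s)
    (hord : ∃ n : ℕ, 1 ≤ n ∧ s^[n] = id) :
    (∀ I : Set S, I.Nonempty → (∀ a ∈ I, ∀ x : S, mul x a ∈ I ∧ mul a x ∈ I) →
        I = Set.univ) ∧
      (∀ x y : S, ∃ u v : S, x = mul (mul u y) v) := by
  obtain ⟨n, hn1, hn⟩ := hord
  have assoc : ∀ x y z : S, mul (mul x y) z = mul x (mul y z) := by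
    intro x y z
    have h := congrFun hPE (x, y, z)
    simp only [Function.comp_apply, pentMap12, pentMap13, pentMap23, hs] at h
    exact congrArg Prod.fst h
  have key : ∀ x y : S, ∃ u v, x = mul (mul u y) v := by
    intro x y
    have hfst : ∀ k, 2 ≤ k → ∃ v, (s^[k] (x, y)).1 = mul (mul x y) v := by
      intro k hk
      induction k with
      | zero => omega
      | succ k ih =>
        rcases Nat.lt_or_ge k 2 with h2 | h2
        · interval_cases k
          · omega
          · refine ⟨θ x y, ?_⟩
            simp [Function.iterate_succ_apply', hs]
        · obtain ⟨v, hv⟩ := ih h2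
          refine ⟨mul v (s^[k] (x, y)).2, ?_⟩
          rw [Function.iterate_succ_apply',
            show s (s^[k] (x, y)) = s ((s^[k] (x, y)).1, (s^[k] (x, y)).2) from by simp,
            hs]
          simp [hv, assoc]
    rcases Nat.lt_or_ge n 2 with h2 | h2
    · interval_cases n
      have hxy : mul x y = x := by
        have h := congrFun hn (x, y)
        simp [hs] at h
        exact h.1
      exact ⟨x, y, by rw [hxy, hxy]⟩
    · obtain ⟨v, hv⟩ := hfst n h2
      have hx : (s^[n] (x, y)).1 = x := by rw [hn]; rfl
      exact ⟨x, v, by rw [← hv, hx]⟩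
  refine ⟨?_, key⟩
  rintro I ⟨a, ha⟩ hI
  apply Set.eq_univ_of_forall
  intro x
  obtain ⟨u, v, hx⟩ := key x a
  rw [hx]
  exact (hI _ ((hI a ha u).1) v).2
end

section
/- If (S,s) is a bijective solution of the Pentagon Equation on a left zero semigroup S (i.e., xy = x for all x,y ∈ S), then each map θ_x is bijective, and moreover each θ_x is either the identity or a fixed-point free permutation of S. -/
theorem left_zero_pentagon_theta_bijective {S : Type*} (θ : S → S → S)
    (s : S × S → S × S) (hs : ∀ x y, s (x, y) = (x, θ x y))
    (hPE : IsPentagonSolution s) (hbij : Function.Bijective s) :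
    ∀ x : S, Function.Bijective (θ x) ∧ (θ x = id ∨ ∀ y : S, θ x y ≠ y) := by
  -- key pentagon identity: θ (θ x y) (θ x z) = θ y z
  have key : ∀ x y z : S, θ (θ x y) (θ x z) = θ y z := by
    intro x y z
    have := congrFun hPE (x, y, z)
    simp only [Function.comp, pentMap12, pentMap13, pentMap23, hs] at this
    exact congrArg (fun p : S × S × S => p.2.2) this
  -- θ x is bijective since s is
  have hbj : ∀ x : S, Function.Bijective (θ x) := by
    intro x
    constructor
    · intro a b hab
      have : s (x, a) = s (x, b) := by rw [hs, hs, hab]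
      exact (Prod.mk.injEq _ _ _ _).mp (hbij.1 this) |>.2
    · intro z
      obtain ⟨⟨u, v⟩, huv⟩ := hbij.2 (x, z)
      rw [hs] at huv
      obtain ⟨h1, h2⟩ := Prod.mk.injEq _ _ _ _ ▸ huv
      exact ⟨v, by rw [← h1]; exact h2⟩
  intro x
  refine ⟨hbj x, ?_⟩
  by_cases hfix : ∃ y, θ x y = y
  · left
    obtain ⟨y, hy⟩ := hfix
    funext z
    have := key x y z
    rw [hy] at this
    exact (hbj y).1 this
  · right
    push_neg at hfix
    exact hfix
end

section
/- If G is a group and (G,s) is a bijective set-theoretic solution of the Pentagon Equation, then s(x,y) = (xy, y) for all x,y ∈ G. In particular, the bijective solution of the Pentagon Equation on a group is unique. -/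
theorem group_pentagon_unique {G : Type*} [Group G] (θ : G → G → G)
    (s : G × G → G × G) (hs : ∀ x y, s (x, y) = (x * y, θ x y))
    (hPE : IsPentagonSolution s) (hbij : Function.Bijective s) :
    ∀ x y : G, s (x, y) = (x * y, y) := by
  have cond : ∀ x y z : G,
      θ x y * θ (x * y) z = θ x (y * z) ∧ θ (θ x y) (θ (x * y) z) = θ y z := by
    intro x y z
    have h := congrFun hPE (x, y, z)
    simp only [Function.comp, pentMap12, pentMap13, pentMap23, hs, Prod.mk.injEq] at h
    exact ⟨h.2.1, h.2.2⟩
  have h1 : ∀ x : G, θ x 1 = 1 := by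
    intro x
    have h := (cond x 1 1).1
    simp only [mul_one, one_mul] at h
    exact mul_left_cancel (h.trans (mul_one _).symm)
  have h2 : ∀ x y : G, θ 1 (θ x y) = θ 1 y := by
    intro x y
    have h := (cond x 1 y).2
    rwa [h1, mul_one] at h
  have h3 : ∀ y : G, θ y y⁻¹ = (θ 1 y)⁻¹ := by
    intro y
    have h := (cond 1 y y⁻¹).1
    rw [one_mul, mul_inv_cancel, h1] at h
    exact eq_inv_of_mul_eq_one_right h
  have hinj : Function.Injective (θ 1) := by
    intro u v huv
    have e1 : s (u, u⁻¹) = s (v, v⁻¹) := by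
      rw [hs, hs, h3, h3, huv, mul_inv_cancel, mul_inv_cancel]
    have := hbij.1 e1
    exact (Prod.mk.injEq _ _ _ _ ▸ this).1
  intro x y
  rw [hs, hinj (h2 x y)]
end

section
/- Let (S,s) be an involutive solution of the Pentagon Equation. Then θ_{θ_x(y)} = θ_x ∘ θ_y, θ_x² = id, and θ_{xy} = θ_x for all x,y ∈ S. -/
theorem involutive_pentagon_theta_props {S : Type*} (mul θ : S → S → S)
    (s : S × S → S × S) (hs : ∀ x y, s (x, y) = (mul x y, θ x y))
    (hPE : IsPentagonSolution s) (hinv : s ∘ s = id) :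
    ∀ x y : S, θ (θ x y) = θ x ∘ θ y ∧ θ x ∘ θ x = id ∧ θ (mul x y) = θ x := by
  have hinvp : ∀ x y : S, s (s (x, y)) = (x, y) := fun x y => congrFun hinv (x, y)
  have I1 : ∀ x y, mul (mul x y) (θ x y) = x := by
    intro x y
    have h := hinvp x y
    rw [hs, hs] at h
    exact congrArg Prod.fst h
  have I2 : ∀ x y, θ (mul x y) (θ x y) = y := by
    intro x y
    have h := hinvp x y
    rw [hs, hs] at h
    exact congrArg Prod.snd h
  have hPEp : ∀ p, pentMap23 s (pentMap13 s (pentMap12 s p)) = pentMap12 s (pentMap23 s p) :=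
    fun p => congrFun hPE p
  have expandL : ∀ x y z : S, pentMap23 s (pentMap13 s (pentMap12 s (x, y, z))) =
      (mul (mul x y) z, mul (θ x y) (θ (mul x y) z), θ (θ x y) (θ (mul x y) z)) := by
    intro x y z
    simp [pentMap12, pentMap13, pentMap23, hs]
  have expandR : ∀ x y z : S, pentMap12 s (pentMap23 s (x, y, z)) =
      (mul x (mul y z), θ x (mul y z), θ y z) := by
    intro x y z
    simp [pentMap12, pentMap23, hs]
  have hPE3 : ∀ x y z : S,
      (mul (mul x y) z, mul (θ x y) (θ (mul x y) z), θ (θ x y) (θ (mul x y) z))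
        = ((mul x (mul y z), θ x (mul y z), θ y z) : S × S × S) := by
    intro x y z
    rw [← expandL, ← expandR]
    exact hPEp (x, y, z)
  have P1 : ∀ x y z : S, mul (mul x y) z = mul x (mul y z) :=
    fun x y z => congrArg Prod.fst (hPE3 x y z)
  have P3 : ∀ x y z : S, θ (θ x y) (θ (mul x y) z) = θ y z :=
    fun x y z => congrArg (fun p => p.2.2) (hPE3 x y z)
  -- involutivity of the three maps
  have m12invol : ∀ p : S × S × S, pentMap12 s (pentMap12 s p) = p := by
    rintro ⟨x, y, z⟩
    simp [pentMap12, hs, I1, I2]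
  have m13invol : ∀ p : S × S × S, pentMap13 s (pentMap13 s p) = p := by
    rintro ⟨x, y, z⟩
    simp [pentMap13, hs, I1, I2]
  have m23invol : ∀ p : S × S × S, pentMap23 s (pentMap23 s p) = p := by
    rintro ⟨x, y, z⟩
    simp [pentMap23, hs, I1, I2]
  -- reversed pentagon equation, pointwise
  have hRPE : ∀ p, pentMap12 s (pentMap13 s (pentMap23 s p)) = pentMap23 s (pentMap12 s p) := by
    intro p
    have h := hPEp (pentMap12 s (pentMap13 s (pentMap23 s p)))
    rw [m12invol, m13invol, m23invol] at h
    have h2 := congrArg (fun q => pentMap23 s (pentMap12 s q)) h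
    simp only [m12invol, m23invol] at h2
    exact h2.symm
  have expandL' : ∀ x y z : S, pentMap12 s (pentMap13 s (pentMap23 s (x, y, z))) =
      (mul (mul x (θ y z)) (mul y z), θ (mul x (θ y z)) (mul y z), θ x (θ y z)) := by
    intro x y z
    simp [pentMap12, pentMap13, pentMap23, hs]
  have expandR' : ∀ x y z : S, pentMap23 s (pentMap12 s (x, y, z)) =
      (mul x y, mul (θ x y) z, θ (θ x y) z) := by
    intro x y z
    simp [pentMap12, pentMap23, hs]
  have C : ∀ x y z : S, θ x (θ y z) = θ (θ x y) z := by
    intro x y z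
    have h := (expandL' x y z).symm.trans ((hRPE (x, y, z)).trans (expandR' x y z))
    exact congrArg (fun p => p.2.2) h
  have D : ∀ x y z : S, θ y (θ x z) = θ (θ x y) z := by
    intro x y z
    have h := P3 (mul x y) (θ x y) z
    rwa [I1, I2] at h
  have Comm : ∀ x y z : S, θ x (θ y z) = θ y (θ x z) :=
    fun x y z => (C x y z).trans (D x y z).symm
  have S1 : ∀ x y z : S, θ x (θ y (θ (mul x y) z)) = θ y z := by
    intro x y z
    rw [C]
    exact P3 x y z
  have S2 : ∀ x y z : S, θ (mul x y) (θ x (θ y z)) = θ y z := by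
    intro x y z
    rw [C x y z, C (mul x y) (θ x y) z, I2]
  have Surj : ∀ x w : S, ∃ v, θ x v = w := by
    intro x w
    refine ⟨θ (mul x w) (θ (mul x (mul x w)) (θ x w)), ?_⟩
    rw [S1 x (mul x w) (θ x w), I2]
  have R2 : ∀ x y w : S, θ (mul x y) (θ x w) = w := by
    intro x y w
    obtain ⟨v, hv⟩ := Surj y w
    rw [← hv]
    exact S2 x y v
  have θinj : ∀ x : S, Function.Injective (θ x) := by
    intro x a b h
    have h2 := congrArg (θ (mul x x)) h
    rwa [R2, R2] at h2
  have R1 : ∀ x y z : S, θ x (θ (mul x y) z) = z := by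
    intro x y z
    apply θinj y
    rw [← Comm x y (θ (mul x y) z)]
    exact S1 x y z
  have Step1 : ∀ x w : S, θ (mul (mul x x) x) w = θ x w := by
    intro x w
    calc θ (mul (mul x x) x) w
        = θ (mul (mul x x) x) (θ (mul x x) (θ x w)) := by rw [R2 x x w]
      _ = θ x w := R2 (mul x x) x (θ x w)
  have G1 : ∀ x z : S, θ x (θ x z) = z := by
    intro x z
    have h := R1 x (mul x x) z
    rw [← P1 x x x, Step1] at h
    exact h
  have G2 : ∀ x y w : S, θ (mul x y) w = θ x w := by
    intro x y w
    calc θ (mul x y) w = θ (mul x y) (θ x (θ x w)) := by rw [G1]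
      _ = θ x w := R2 x y (θ x w)
  intro x y
  refine ⟨funext fun z => ?_, funext fun z => G1 x z, funext fun w => G2 x y w⟩
  exact (C x y z).symm
end

section
/- Let (S,s) be an involutive solution of the Pentagon Equation. Then (S,s) is commutative, i.e., s₁₂s₁₃ = s₁₃s₁₂; equivalently, xyz = xzy and θ_{xy} = θ_x for all x,y,z ∈ S. -/
theorem involutive_pentagon_commutative {S : Type*} (mul θ : S → S → S)
    (s : S × S → S × S) (hs : ∀ x y, s (x, y) = (mul x y, θ x y))
    (hPE : IsPentagonSolution s) (hinv : s ∘ s = id) :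
    pentMap12 s ∘ pentMap13 s = pentMap13 s ∘ pentMap12 s ∧
      (∀ x y z : S, mul (mul x y) z = mul (mul x z) y) ∧
      (∀ x y : S, θ (mul x y) = θ x) := by
  have hss : ∀ q : S × S, s (s q) = q := fun q => congrFun hinv q
  have h12 : pentMap12 s ∘ pentMap12 s = id := by
    funext p
    simp [pentMap12, hss]
  have h13 : pentMap13 s ∘ pentMap13 s = id := by
    funext p
    simp [pentMap13, hss]
  have h23 : pentMap23 s ∘ pentMap23 s = id := by
    funext p
    simp [pentMap23, hss]
  have p12 : ∀ p, pentMap12 s (pentMap12 s p) = p := fun p => congrFun h12 p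
  have p13 : ∀ p, pentMap13 s (pentMap13 s p) = p := fun p => congrFun h13 p
  have p23 : ∀ p, pentMap23 s (pentMap23 s p) = p := fun p => congrFun h23 p
  -- from PE: s13 (s12 q) = s23 (s12 (s23 q))
  have hk : ∀ q, pentMap13 s (pentMap12 s q) =
      pentMap23 s (pentMap12 s (pentMap23 s q)) := by
    intro q
    have h1 := congrFun hPE q
    have h2 := congrArg (pentMap23 s) h1
    simpa [Function.comp, p23] using h2
  have sq : ∀ p, pentMap13 s (pentMap12 s (pentMap13 s (pentMap12 s p))) = p := by
    intro p
    rw [hk p, hk, p23, p12, p23]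
  have hcomm : pentMap12 s ∘ pentMap13 s = pentMap13 s ∘ pentMap12 s := by
    funext p
    show pentMap12 s (pentMap13 s p) = pentMap13 s (pentMap12 s p)
    calc pentMap12 s (pentMap13 s p)
        = pentMap12 s (pentMap13 s (pentMap13 s (pentMap12 s
            (pentMap13 s (pentMap12 s p))))) := by rw [sq]
      _ = pentMap12 s (pentMap12 s (pentMap13 s (pentMap12 s p))) := by rw [p13]
      _ = pentMap13 s (pentMap12 s p) := by rw [p12]
  refine ⟨hcomm, ?_, ?_⟩
  · intro x y z
    have := congrFun hcomm (x, y, z)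
    simp [pentMap12, pentMap13, hs] at this
    exact this.1.symm
  · intro x y
    funext z
    have := congrFun hcomm (x, z, y)
    simp [pentMap12, pentMap13, hs] at this
    exact this.2.1
end

section
/- Let (S,s) be an involutive solution of the Pentagon Equation. Then (S,s) is cocommutative, i.e., s₁₃s₂₃ = s₂₃s₁₃; equivalently, xθ_y(z) = xz and θ_x ∘ θ_y = θ_y ∘ θ_x for all x,y,z ∈ S. -/
private lemma pm12_invol {S : Type*} {s : S × S → S × S} (h : ∀ p, s (s p) = p) :
    ∀ q, pentMap12 s (pentMap12 s q) = q := by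
  rintro ⟨x, y, z⟩
  simp only [pentMap12, Prod.mk.eta, h]

private lemma pm23_invol {S : Type*} {s : S × S → S × S} (h : ∀ p, s (s p) = p) :
    ∀ q, pentMap23 s (pentMap23 s q) = q := by
  rintro ⟨x, y, z⟩
  simp only [pentMap23, Prod.mk.eta, h]

private lemma pm13_invol {S : Type*} {s : S × S → S × S} (h : ∀ p, s (s p) = p) :
    ∀ q, pentMap13 s (pentMap13 s q) = q := by
  rintro ⟨x, y, z⟩
  simp only [pentMap13, Prod.mk.eta, h]

theorem involutive_pentagon_cocommutative {S : Type*} (mul θ : S → S → S)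
    (s : S × S → S × S) (hs : ∀ x y, s (x, y) = (mul x y, θ x y))
    (hPE : IsPentagonSolution s) (hinv : s ∘ s = id) :
    pentMap13 s ∘ pentMap23 s = pentMap23 s ∘ pentMap13 s ∧
      (∀ x y z : S, mul x (θ y z) = mul x z) ∧
      (∀ x y : S, θ x ∘ θ y = θ y ∘ θ x) := by
  have hss : ∀ p : S × S, s (s p) = p := fun p => congrFun hinv p
  set a := pentMap12 s with ha_def
  set b := pentMap23 s with hb_def
  set c := pentMap13 s with hc_def
  have haa : ∀ q, a (a q) = q := pm12_invol hss
  have hbb : ∀ q, b (b q) = q := pm23_invol hss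
  have hcc : ∀ q, c (c q) = q := pm13_invol hss
  have hPE' : ∀ q, b (c (a q)) = a (b q) := fun q => congrFun hPE q
  -- c = b ∘ a ∘ b ∘ a
  have hc_eq : ∀ q, c q = b (a (b (a q))) := by
    intro q
    have h1 := hPE' (a q)
    rw [haa] at h1
    have h2 := congrArg b h1
    rwa [hbb] at h2
  -- (b a b a)² = id
  have h4 : ∀ q, b (a (b (a (b (a (b (a q))))))) = q := by
    intro q
    have h := hcc q
    rw [hc_eq, hc_eq] at h
    exact h
  have h6 : ∀ t, b (a (b (a (b (a t))))) = a (b t) := by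
    intro t
    have h := h4 (a (b t))
    rw [haa, hbb] at h
    exact h
  have hcomm : c ∘ b = b ∘ c := by
    funext q
    show c (b q) = b (c q)
    rw [hc_eq (b q), hc_eq q, hbb]
    have h := h6 (a q)
    rwa [haa] at h
  refine ⟨hcomm, ?_, ?_⟩
  · intro x y z
    have h := congrFun hcomm (x, y, z)
    simp only [Function.comp_apply, hb_def, hc_def, pentMap13, pentMap23, hs] at h
    rw [Prod.mk.injEq, Prod.mk.injEq] at h
    exact h.1
  · intro x y
    funext z
    have h := congrFun hcomm (x, y, z)
    simp only [Function.comp_apply, hb_def, hc_def, pentMap13, pentMap23, hs] at h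
    rw [Prod.mk.injEq, Prod.mk.injEq] at h
    exact h.2.2
end

section
/- Let (S,s) be an involutive solution of the Pentagon Equation, and define x ~ y iff θ_x = θ_y. Then ~ is a congruence on the semigroup S, the quotient S̄ = S/~ is a left zero semigroup, and the induced map s̄(x̄,ȳ) = (x̄, θ_x(y)‾) is a well-defined involutive solution of the Pentagon Equation on S̄ (the retract Ret(S,s)). -/
/-- The retract relation x ~ y iff θ_x = θ_y, as a setoid. -/
def retractSetoid {S : Type*} (θ : S → S → S) : Setoid S :=
  ⟨fun x y => θ x = θ y, ⟨fun _ => rfl, Eq.symm, Eq.trans⟩⟩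

theorem retract_is_involutive_solution {S : Type*} (mul θ : S → S → S)
    (s : S × S → S × S) (hs : ∀ x y, s (x, y) = (mul x y, θ x y))
    (hPE : IsPentagonSolution s) (hinv : s ∘ s = id) :
    (∀ x x' y y' : S, θ x = θ x' → θ y = θ y' → θ (mul x y) = θ (mul x' y')) ∧
    ∃ sbar : Quotient (retractSetoid θ) × Quotient (retractSetoid θ) →
        Quotient (retractSetoid θ) × Quotient (retractSetoid θ),
      (∀ x y : S, sbar (Quotient.mk (retractSetoid θ) x, Quotient.mk (retractSetoid θ) y) =
          (Quotient.mk (retractSetoid θ) (mul x y), Quotient.mk (retractSetoid θ) (θ x y))) ∧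
      (∀ x y : S, Quotient.mk (retractSetoid θ) (mul x y) = Quotient.mk (retractSetoid θ) x) ∧
      IsPentagonSolution sbar ∧ sbar ∘ sbar = id := by
  -- pointwise involutivity
  have e45 : ∀ x y, mul (mul x y) (θ x y) = x ∧ θ (mul x y) (θ x y) = y := by
    intro x y
    have h := congrFun hinv (x, y)
    simp only [Function.comp_apply, id_eq, hs, Prod.mk.injEq] at h
    exact h
  have e4 : ∀ x y, mul (mul x y) (θ x y) = x := fun x y => (e45 x y).1
  have e5 : ∀ x y, θ (mul x y) (θ x y) = y := fun x y => (e45 x y).2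
  -- pointwise pentagon
  have hP : ∀ p, pentMap23 s (pentMap13 s (pentMap12 s p)) = pentMap12 s (pentMap23 s p) :=
    fun p => congrFun hPE p
  have hPc : ∀ x y z : S,
      mul (mul x y) z = mul x (mul y z) ∧
      mul (θ x y) (θ (mul x y) z) = θ x (mul y z) ∧
      θ (θ x y) (θ (mul x y) z) = θ y z := by
    intro x y z
    have h := hP (x, y, z)
    simp only [pentMap12, pentMap13, pentMap23, hs, Prod.mk.injEq] at h
    exact h
  have e1 : ∀ x y z, mul (mul x y) z = mul x (mul y z) := fun x y z => (hPc x y z).1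
  have e2 : ∀ x y z, mul (θ x y) (θ (mul x y) z) = θ x (mul y z) := fun x y z => (hPc x y z).2.1
  have e3 : ∀ x y z, θ (θ x y) (θ (mul x y) z) = θ y z := fun x y z => (hPc x y z).2.2
  -- pentMaps are involutive
  have L12 : ∀ p, pentMap12 s (pentMap12 s p) = p := by
    rintro ⟨a, b, c⟩
    simp only [pentMap12, hs]
    rw [e4, e5]
  have L13 : ∀ p, pentMap13 s (pentMap13 s p) = p := by
    rintro ⟨a, b, c⟩
    simp only [pentMap13, hs]
    rw [e4, e5]
  have L23 : ∀ p, pentMap23 s (pentMap23 s p) = p := by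
    rintro ⟨a, b, c⟩
    simp only [pentMap23, hs]
    rw [e4, e5]
  -- rearranged pentagon identities
  have hI : ∀ p, pentMap13 s (pentMap12 s p) =
      pentMap23 s (pentMap12 s (pentMap23 s p)) := by
    intro p
    have h := hP p
    calc pentMap13 s (pentMap12 s p)
        = pentMap23 s (pentMap23 s (pentMap13 s (pentMap12 s p))) := (L23 _).symm
      _ = pentMap23 s (pentMap12 s (pentMap23 s p)) := by rw [h]
  have hV : ∀ p, pentMap13 s (pentMap12 s (pentMap23 s p)) =
      pentMap23 s (pentMap12 s p) := by
    intro p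
    have h := hI (pentMap23 s p)
    rwa [L23] at h
  have hR : ∀ p, pentMap12 s (pentMap13 s (pentMap23 s p)) =
      pentMap23 s (pentMap12 s p) := by
    intro p
    have h := hP (pentMap23 s (pentMap12 s p))
    rw [L23, L12] at h
    have h2 : pentMap13 s (pentMap12 s (pentMap23 s (pentMap12 s p))) = pentMap23 s p := by
      have := congrArg (pentMap23 s) h
      rwa [L23] at this
    have h3 : pentMap12 s (pentMap23 s (pentMap12 s p)) = pentMap13 s (pentMap23 s p) := by
      have := congrArg (pentMap13 s) h2
      rwa [L13] at this
    have h4 := congrArg (pentMap12 s) h3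
    rw [L12] at h4
    exact h4.symm
  -- component identities
  have hIc : ∀ x y z : S, θ x y = mul (θ x (mul y z)) (θ y z) := by
    intro x y z
    have h := hI (x, y, z)
    simp only [pentMap12, pentMap13, pentMap23, hs, Prod.mk.injEq] at h
    exact h.2.1
  have hVc : ∀ x y z : S, θ x (mul y z) = mul (θ x y) z := by
    intro x y z
    have h := hV (x, y, z)
    simp only [pentMap12, pentMap13, pentMap23, hs, Prod.mk.injEq] at h
    exact h.2.1
  have hM3 : ∀ x y z : S, θ (mul x (θ y z)) (mul y z) = mul (θ x y) z := by
    intro x y z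
    have h := hR (x, y, z)
    simp only [pentMap12, pentMap13, pentMap23, hs, Prod.mk.injEq] at h
    exact h.2.1
  -- θ_{xc} = θ_x
  have hA : ∀ x c w : S, θ (mul x c) w = θ x w := by
    intro x c w
    have h1 := hM3 x (mul w c) (θ w c)
    rw [e5, e4] at h1
    rw [← hIc x w c] at h1
    exact h1
  -- B : θ_{θ_x y} z = θ_y (θ_x z)
  have hB : ∀ x y z : S, θ (θ x y) z = θ y (θ x z) := by
    intro x y z
    have h := e3 (mul x y) (θ x y) z
    rw [e5, e4] at h
    exact h.symm
  -- congruence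
  have hcong : ∀ x x' y y' : S, θ x = θ x' → θ y = θ y' → θ (mul x y) = θ (mul x' y') := by
    intro x x' y y' hx _
    funext w
    rw [hA x y w, hA x' y' w, hx]
  have hθcong : ∀ x x' y y' : S, θ x = θ x' → θ y = θ y' → θ (θ x y) = θ (θ x' y') := by
    intro x x' y y' hx hy
    funext z
    rw [hB x y z, hB x' y' z, hx, hy]
  refine ⟨hcong, ?_⟩
  -- build sbar
  have hresp : ∀ (a₁ b₁ a₂ b₂ : S), (retractSetoid θ).r a₁ a₂ → (retractSetoid θ).r b₁ b₂ →
      ((Quotient.mk (retractSetoid θ) (mul a₁ b₁), Quotient.mk (retractSetoid θ) (θ a₁ b₁)) :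
        Quotient (retractSetoid θ) × Quotient (retractSetoid θ)) =
      (Quotient.mk (retractSetoid θ) (mul a₂ b₂), Quotient.mk (retractSetoid θ) (θ a₂ b₂)) := by
    intro a₁ b₁ a₂ b₂ h1 h2
    simp only [Prod.mk.injEq]
    exact ⟨Quotient.sound (hcong a₁ a₂ b₁ b₂ h1 h2), Quotient.sound (hθcong a₁ a₂ b₁ b₂ h1 h2)⟩
  set Q := Quotient (retractSetoid θ) with hQ
  set sbar : Q × Q → Q × Q := fun p => Quotient.lift₂
    (fun a b => (Quotient.mk (retractSetoid θ) (mul a b), Quotient.mk (retractSetoid θ) (θ a b)))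
    hresp p.1 p.2 with hsbar
  have hmk : ∀ x y : S, sbar (Quotient.mk (retractSetoid θ) x, Quotient.mk (retractSetoid θ) y) =
      (Quotient.mk (retractSetoid θ) (mul x y), Quotient.mk (retractSetoid θ) (θ x y)) :=
    fun x y => rfl
  refine ⟨sbar, hmk, ?_, ?_, ?_⟩
  · intro x y
    exact Quotient.sound (funext fun w => hA x y w)
  · funext p
    obtain ⟨a, b, c⟩ := p
    induction a using Quotient.ind with | _ x => ?_
    induction b using Quotient.ind with | _ y => ?_
    induction c using Quotient.ind with | _ z => ?_
    simp only [Function.comp_apply, pentMap12, pentMap13, pentMap23, hmk, Prod.mk.injEq]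
    exact ⟨congrArg _ (e1 x y z), congrArg _ (e2 x y z), congrArg _ (e3 x y z)⟩
  · funext p
    obtain ⟨a, b⟩ := p
    induction a using Quotient.ind with | _ x => ?_
    induction b using Quotient.ind with | _ y => ?_
    simp only [Function.comp_apply, id_eq, hmk, Prod.mk.injEq]
    exact ⟨congrArg _ (e4 x y), congrArg _ (e5 x y)⟩
end

section
/- Let (S,s) be an involutive solution of the Pentagon Equation. Then its retract Ret(S,s) is irretractable: for the induced solution (S̄,s̄), the maps θ̄_x̄ = θ̄_ȳ imply x̄ = ȳ. -/
theorem retract_irretractable {S : Type*} (mul θ : S → S → S)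
    (s : S × S → S × S) (hs : ∀ x y, s (x, y) = (mul x y, θ x y))
    (hPE : IsPentagonSolution s) (hinv : s ∘ s = id) :
    ∀ x y : S, (∀ z : S, θ (θ x z) = θ (θ y z)) → θ x = θ y := by
  have hinv' : ∀ p : S × S, s (s p) = p := fun p => congrFun hinv p
  have I1 : ∀ x y, mul (mul x y) (θ x y) = x := by
    intro x y
    have h := hinv' (x, y)
    rw [hs, hs] at h
    exact congrArg Prod.fst h
  have I2 : ∀ x y, θ (mul x y) (θ x y) = y := by
    intro x y
    have h := hinv' (x, y)
    rw [hs, hs] at h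
    exact congrArg Prod.snd h
  have sinj : Function.Injective s := by
    intro p q h
    have h1 := hinv' p
    rw [h, hinv' q] at h1
    exact h1.symm
  have hPE' : ∀ x y z : S,
      (mul (mul x y) z, mul (θ x y) (θ (mul x y) z), θ (θ x y) (θ (mul x y) z))
        = ((mul x (mul y z), θ x (mul y z), θ y z) : S × S × S) := by
    intro x y z
    have h := congrFun hPE (x, y, z)
    simpa [pentMap12, pentMap13, pentMap23, Function.comp, hs] using h
  have B : ∀ x y z : S, mul (θ x y) (θ (mul x y) z) = θ x (mul y z) := by
    intro x y z
    exact congrArg (fun p => p.2.1) (hPE' x y z)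
  have C : ∀ x y z : S, θ (θ x y) (θ (mul x y) z) = θ y z := by
    intro x y z
    exact congrArg (fun p => p.2.2) (hPE' x y z)
  have F : ∀ u x y, θ u (mul x y) = mul (θ u x) y := by
    intro u x y
    have hB := B u (mul x y) (θ x y)
    rw [I1] at hB
    have hC := C u (mul x y) (θ x y)
    rw [I2] at hC
    have h := I1 (θ u (mul x y)) (θ (mul u (mul x y)) (θ x y))
    rw [hB, hC] at h
    exact h.symm
  have P : ∀ a b c, mul a (θ b c) = mul a c := by
    intro a b c
    have hB := B (mul b a) (θ b a) c
    rw [I1, I2, F, I2] at hB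
    exact hB
  have Q : ∀ z x c, θ z (θ x c) = θ (θ x z) c := by
    intro z x c
    have hC := C (mul x z) (θ x z) c
    rw [I1, I2] at hC
    exact hC
  intro x y H
  funext w
  have key : s (x, θ x w) = s (x, θ y w) := by
    rw [hs, hs]
    have h1 : mul x (θ x w) = mul x (θ y w) := (P x x w).trans (P x y w).symm
    have h2 : θ x (θ x w) = θ x (θ y w) := by
      rw [Q x x w, Q x y w, H x]
    rw [h1, h2]
  exact congrArg Prod.snd (sinj key)
end

section
/- Let (A,+) be an elementary abelian 2-group (every element satisfies a + a = 0 and + is commutative). Then the map t: A × A → A × A defined by t(x,y) = (x, x+y) is an irretractable involutive solution of the Pentagon Equation, where A carries the left zero multiplication x·y = x. -/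
theorem elementary_abelian_irretractable_solution {A : Type*} [AddCommGroup A]
    (h2 : ∀ a : A, a + a = 0)
    (t : A × A → A × A) (ht : ∀ x y : A, t (x, y) = (x, x + y)) :
    IsPentagonSolution t ∧ t ∘ t = id ∧
      (∀ x y : A, (fun z => x + z) = (fun z => y + z) → x = y) := by
  refine ⟨?_, ?_, ?_⟩
  · funext p
    obtain ⟨x, y, z⟩ := p
    simp [pentMap12, pentMap13, pentMap23, ht]
    rw [show x + y + (x + z) = (x + x) + (y + z) by abel, h2, zero_add]
  · funext p
    obtain ⟨x, y⟩ := p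
    simp [ht, ← add_assoc, h2]
  · intro x y h
    have := congrFun h 0
    simpa using this
end

section
/- Let (S,s) be an irretractable involutive solution of the Pentagon Equation. Then the operation x + y := θ_x(y) makes S into an elementary abelian 2-group (associative, commutative, with identity 0 = θ_a(a) for any a, and x + x = 0 for all x), and s(x,y) = (x, x+y). -/
theorem irretractable_gives_elementary_abelian {S : Type*} (mul θ : S → S → S)
    (s : S × S → S × S) (hs : ∀ x y, s (x, y) = (mul x y, θ x y))
    (hPE : IsPentagonSolution s) (hinv : s ∘ s = id)
    (hirr : ∀ x y : S, θ x = θ y → x = y) :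
    (∀ x y : S, mul x y = x) ∧
      (∀ x y z : S, θ (θ x y) z = θ x (θ y z)) ∧
      (∀ x y : S, θ x y = θ y x) ∧
      (∀ a b : S, θ a a = θ b b) ∧
      (∀ a x : S, θ (θ a a) x = x ∧ θ x (θ a a) = x) ∧
      (∀ x y : S, s (x, y) = (x, θ x y)) := by
  -- Extract the three component equations of the Pentagon Equation
  have pe : ∀ x y z : S,
      mul (mul x y) z = mul x (mul y z) ∧
      mul (θ x y) (θ (mul x y) z) = θ x (mul y z) ∧
      θ (θ x y) (θ (mul x y) z) = θ y z := by
    intro x y z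
    have h := congrFun hPE (x, y, z)
    simp only [Function.comp, pentMap12, pentMap23, pentMap13, hs, Prod.mk.injEq] at h
    exact ⟨h.1, h.2.1, h.2.2⟩
  have pe1 : ∀ x y z : S, mul (mul x y) z = mul x (mul y z) := fun x y z => (pe x y z).1
  have pe2 : ∀ x y z : S, mul (θ x y) (θ (mul x y) z) = θ x (mul y z) :=
    fun x y z => (pe x y z).2.1
  have pe3 : ∀ x y z : S, θ (θ x y) (θ (mul x y) z) = θ y z := fun x y z => (pe x y z).2.2
  -- Involutivity components
  have hi : ∀ x y : S, mul (mul x y) (θ x y) = x ∧ θ (mul x y) (θ x y) = y := by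
    intro x y
    have h := congrFun hinv (x, y)
    simp only [Function.comp, hs, id, Prod.mk.injEq] at h
    exact h
  have inv1 : ∀ x y : S, mul (mul x y) (θ x y) = x := fun x y => (hi x y).1
  have inv2 : ∀ x y : S, θ (mul x y) (θ x y) = y := fun x y => (hi x y).2
  -- θ_{θ_x y} = θ_y ∘ θ_x
  have star : ∀ x y z : S, θ (θ x y) z = θ y (θ x z) := by
    intro x y z
    have h := pe3 (mul x y) (θ x y) z
    rw [inv1, inv2] at h
    exact h.symm
  -- (C)
  have hC : ∀ x y z : S, mul (θ x (mul y z)) (θ y z) = θ x y := by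
    intro x y z
    have h := inv1 (θ x y) (θ (mul x y) z)
    rw [pe2, pe3] at h
    exact h
  -- (D): θ_x commutes with right multiplications
  have hD : ∀ x a b : S, θ x (mul a b) = mul (θ x a) b := by
    intro x a b
    have h := hC x (mul a b) (θ a b)
    rw [inv1, inv2] at h
    exact h.symm
  -- (E)
  have hE : ∀ x y z : S, mul (θ x y) (θ (mul x y) z) = mul (θ x y) z := by
    intro x y z
    rw [pe2, hD]
  -- (F)
  have hF : ∀ a w z : S, mul a (θ w z) = mul a z := by
    intro a w z
    have h := hE (mul w a) (θ w a) z
    rw [inv1, inv2] at h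
    exact h
  -- (G'): right multiplication is an involution
  have hG : ∀ x y : S, mul (mul x y) y = x := by
    intro x y
    have h := inv1 x y
    rw [hF (mul x y) x y] at h
    exact h
  -- θ_a is surjective
  have hsurj : ∀ a y : S, θ a (θ (mul a y) y) = y := by
    intro a y
    have h := inv2 (mul a y) y
    rw [hG] at h
    exact h
  -- θ_a is injective
  have hinj : ∀ a u v : S, θ a u = θ a v → u = v := by
    intro a u v h
    apply hirr
    funext w
    obtain ⟨z, rfl⟩ : ∃ z, θ a z = w := ⟨θ (mul a w) w, hsurj a w⟩
    calc θ u (θ a z) = θ (θ a u) z := (star a u z).symm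
      _ = θ (θ a v) z := by rw [h]
      _ = θ v (θ a z) := star a v z
  -- (I)
  have hI : ∀ x y z : S, θ x (θ (mul x y) z) = z := by
    intro x y z
    apply hinj y
    rw [← star, pe3]
  -- (I')
  have hI' : ∀ a y z : S, θ (mul a y) (θ a z) = z := by
    intro a y z
    have h := hI (mul a y) y z
    rw [hG] at h
    exact h
  -- mul a y does not depend on y
  have hconst : ∀ a y z : S, mul a y = mul a z := by
    intro a y z
    apply hirr
    funext w
    calc θ (mul a y) w = θ (mul a y) (θ a (θ (mul a z) w)) := by rw [hI a z w]
      _ = θ (mul a z) w := hI' a y (θ (mul a z) w)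
  -- left zero
  have hmul : ∀ x y : S, mul x y = x := by
    intro x y
    calc mul x y = mul x (mul y y) := hconst x y (mul y y)
      _ = mul (mul x y) y := (pe1 x y y).symm
      _ = x := hG x y
  -- θ_x is an involution
  have hsq : ∀ x y : S, θ x (θ x y) = y := by
    intro x y
    have h := inv2 x y
    rwa [hmul] at h
  -- maps θ_x, θ_y commute
  have hcomm2 : ∀ x y z : S, θ x (θ y z) = θ y (θ x z) := by
    intro x y z
    have h4 : θ y (θ x (θ y (θ x z))) = z := by
      have h := hsq (θ x y) z
      rwa [star, star] at h
    calc θ x (θ y z) = θ x (θ y (θ y (θ x (θ y (θ x z))))) := by rw [h4]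
      _ = θ x (θ x (θ y (θ x z))) := by rw [hsq]
      _ = θ y (θ x z) := hsq x _
  have hassoc : ∀ x y z : S, θ (θ x y) z = θ x (θ y z) := by
    intro x y z
    rw [star, hcomm2]
  have hcomm : ∀ x y : S, θ x y = θ y x := by
    intro x y
    apply hirr
    funext z
    rw [star, star, hcomm2]
  have hzero : ∀ a b : S, θ a a = θ b b := by
    intro a b
    apply hirr
    funext z
    rw [star, star, hsq, hsq]
  refine ⟨hmul, hassoc, hcomm, hzero, ?_, ?_⟩
  · intro a x
    constructor
    · rw [star, hsq]
    · rw [hcomm, star, hsq]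
  · intro x y
    rw [hs, hmul]
end

section
/- Let A be an elementary abelian 2-group, X a non-empty set, and σ: A → Sym(X) any function (not necessarily a homomorphism). Define S = X × A with multiplication (x,a)·(y,b) = (x,a) and s((x,a),(y,b)) = ((x,a), (σ_{a+b}σ_b⁻¹(y), a+b)). Then (S,s) is an involutive solution of the Pentagon Equation. -/
/-- The extension solution Ext_X^σ(A, t_A) on X × A. -/
def extSol {X A : Type*} [AddCommGroup A] (σ : A → Equiv.Perm X) :
    (X × A) × (X × A) → (X × A) × (X × A) :=
  fun p => (p.1, (σ (p.1.2 + p.2.2) ((σ p.2.2).symm p.2.1), p.1.2 + p.2.2))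

theorem extension_is_involutive_solution {X A : Type*} [Nonempty X] [AddCommGroup A]
    (h2 : ∀ a : A, a + a = 0) (σ : A → Equiv.Perm X) :
    IsPentagonSolution (extSol σ) ∧ extSol σ ∘ extSol σ = id := by
  constructor
  · funext ⟨⟨x,a⟩,⟨y,b⟩,⟨z,c⟩⟩
    simp only [IsPentagonSolution, pentMap12, pentMap13, pentMap23, extSol, Function.comp_apply,
      Prod.mk.injEq]
    have key : a + b + (a + c) = b + c := by
      have := h2 a
      rw [add_comm a b, add_assoc, ← add_assoc a a c, this, zero_add]
    refine ⟨trivial, trivial, ?_, key⟩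
    rw [key, Equiv.symm_apply_apply]
  · funext ⟨⟨x,a⟩,⟨y,b⟩⟩
    simp only [extSol, Function.comp_apply, id_eq, Prod.mk.injEq]
    have hab : a + (a + b) = b := by
      rw [← add_assoc, h2, zero_add]
    refine ⟨trivial, ?_, hab⟩
    rw [hab, Equiv.symm_apply_apply, Equiv.apply_symm_apply]
end

section
/- Let A be an elementary abelian 2-group, X a non-empty set, and σ, ρ: A → Sym(X) two arbitrary functions. Then the solutions Ext_X^σ(A,t_A) and Ext_X^ρ(A,t_A) of the Pentagon Equation are isomorphic; explicitly, after normalizing σ_0 = ρ_0 = id, the map f(x,a) = (ρ_a σ_a⁻¹(x), a) is a bijection satisfying (f × f) ∘ s_σ = s_ρ ∘ (f × f). -/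
private lemma ext_aux {X A : Type*} [AddCommGroup A] (σ ρ : A → Equiv.Perm X) :
    Function.Bijective (fun p : X × A => (ρ p.2 ((σ p.2).symm p.1), p.2)) ∧
      Prod.map (fun p : X × A => (ρ p.2 ((σ p.2).symm p.1), p.2))
          (fun p : X × A => (ρ p.2 ((σ p.2).symm p.1), p.2)) ∘ extSol σ =
        extSol ρ ∘ Prod.map (fun p : X × A => (ρ p.2 ((σ p.2).symm p.1), p.2))
          (fun p : X × A => (ρ p.2 ((σ p.2).symm p.1), p.2)) := by
  constructor
  · apply Function.bijective_iff_has_inverse.2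
    refine ⟨fun p : X × A => (σ p.2 ((ρ p.2).symm p.1), p.2), fun p => ?_, fun p => ?_⟩ <;> simp
  · funext p
    simp [extSol, Prod.map]

theorem extensions_isomorphic {X A : Type*} [Nonempty X] [AddCommGroup A]
    (h2 : ∀ a : A, a + a = 0) (σ ρ : A → Equiv.Perm X) :
    (∃ f : X × A → X × A, Function.Bijective f ∧
        Prod.map f f ∘ extSol σ = extSol ρ ∘ Prod.map f f) ∧
    (σ 0 = 1 → ρ 0 = 1 →
      Function.Bijective (fun p : X × A => (ρ p.2 ((σ p.2).symm p.1), p.2)) ∧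
      Prod.map (fun p : X × A => (ρ p.2 ((σ p.2).symm p.1), p.2))
          (fun p : X × A => (ρ p.2 ((σ p.2).symm p.1), p.2)) ∘ extSol σ =
        extSol ρ ∘ Prod.map (fun p : X × A => (ρ p.2 ((σ p.2).symm p.1), p.2))
          (fun p : X × A => (ρ p.2 ((σ p.2).symm p.1), p.2))) := by
  exact ⟨⟨_, (ext_aux σ ρ).1, (ext_aux σ ρ).2⟩, fun _ _ => ext_aux σ ρ⟩
end
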